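/- For each integer t ≥ 4 with 4 ∣ t, the circulant graph Circ(4t + 8, {1, 2, 3, …, 2t + 3} \ {t + 1, t + 3, t + 4}) is a 4t-regular nut graph of order 4t + 8. -/

import Mathlib

open Classical in
/-- The adjacency matrix of a simple graph over `ℚ`. -/
noncomputable def adjMatrixQ {V : Type*} [Fintype V] (G : SimpleGraph V) : Matrix V V ℚ :=
  Matrix.of fun i j => if G.Adj i j then 1 else 0

/-- A nut graph: a simple graph on at least one vertex whose rational adjacency matrix has
nullity one, and some vector in its kernel has all entries nonzero. -/
def IsNutGraph {V : Type*} [Fintype V] (G : SimpleGraph V) : Prop :=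
  Nonempty V ∧
    Module.finrank ℚ (LinearMap.ker (adjMatrixQ G).mulVecLin) = 1 ∧
    ∃ v : V → ℚ, (adjMatrixQ G).mulVec v = 0 ∧ ∀ i, v i ≠ 0

/-- The circulant graph `Circ(n, S)`: vertices `ZMod n`, distinct `i, j` adjacent iff
`(i - j) mod n` or `(j - i) mod n` belongs to `S`. -/
def circulantGraph (n : ℕ) (S : Finset ℕ) : SimpleGraph (ZMod n) where
  Adj i j := i ≠ j ∧ ((i - j).val ∈ S ∨ (j - i).val ∈ S)
  symm := ⟨fun _ _ h => ⟨h.1.symm, h.2.symm⟩⟩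
  loopless := ⟨fun _ h => h.1 rfl⟩

open Polynomial


lemma cyc_aux (ζ : ℂ) (N : ℕ) (hN : N ≠ 0) (hζN : ζ ^ N = 1)
    (h : ζ^4 + 2*ζ^3 - 2*ζ^2 + 2*ζ + 1 = 0) : False := by
  have hfin : IsOfFinOrder ζ := by
    rw [isOfFinOrder_iff_pow_eq_one]
    exact ⟨N, Nat.pos_of_ne_zero hN, hζN⟩
  set m := orderOf ζ with hm
  have hmpos : 0 < m := hfin.orderOf_pos
  have hprim : IsPrimitiveRoot ζ m := IsPrimitiveRoot.orderOf ζ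
  have hζ1 : ζ ≠ 1 := by
    intro h1
    rw [h1] at h
    norm_num at h
  have hm1 : m ≠ 1 := by
    intro h1
    exact hζ1 (orderOf_eq_one_iff.mp (hm ▸ h1))
  have hm2 : 2 ≤ m := by omega
  set q : ℚ[X] := X^4 + 2*X^3 - 2*X^2 + 2*X + 1 with hq
  set qZ : ℤ[X] := X^4 + 2*X^3 - 2*X^2 + 2*X + 1 with hqZ
  have hmapq : qZ.map (Int.castRingHom ℚ) = q := by
    simp [hq, hqZ, Polynomial.map_add, Polynomial.map_sub, Polynomial.map_pow,
      Polynomial.map_mul, Polynomial.map_ofNat]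
  have haev : Polynomial.aeval ζ q = 0 := by
    simp only [hq, map_add, map_sub, map_pow, map_mul, aeval_X, map_ofNat, aeval_one]
    linear_combination h
  have hq0 : q ≠ 0 := by
    intro h0
    have := congrArg (fun p => Polynomial.eval (0:ℚ) p) h0
    simp [hq] at this
  have hdvd : Polynomial.cyclotomic m ℚ ∣ q := by
    rw [Polynomial.cyclotomic_eq_minpoly_rat hprim hmpos]
    exact minpoly.dvd ℚ ζ haev
  -- degree bound
  have hdegq : q.natDegree ≤ 4 := by
    rw [hq]
    compute_degree
  have htot : Nat.totient m ≤ 4 := by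
    have h4 := Polynomial.natDegree_le_of_dvd hdvd hq0
    rw [Polynomial.natDegree_cyclotomic] at h4
    exact h4.trans hdegq
  -- integer divisibility
  have hZdvd : Polynomial.cyclotomic m ℤ ∣ qZ := by
    have hmonic : (Polynomial.cyclotomic m ℤ).Monic := Polynomial.cyclotomic.monic m ℤ
    rw [← Polynomial.modByMonic_eq_zero_iff_dvd hmonic]
    have hinj : Function.Injective (Int.castRingHom ℚ) := Int.cast_injective
    apply Polynomial.map_injective _ hinj
    rw [Polynomial.map_modByMonic _ hmonic, hmapq, Polynomial.map_cyclotomic_int,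
      Polynomial.map_zero,
      Polynomial.modByMonic_eq_zero_iff_dvd (Polynomial.cyclotomic.monic m ℚ)]
    exact hdvd
  have heval2 : (Polynomial.cyclotomic m ℤ).eval 2 ∣ 29 := by
    have := Polynomial.eval_dvd (x := (2:ℤ)) hZdvd
    have hq2 : qZ.eval 2 = 29 := by norm_num [hqZ]
    rwa [hq2] at this
  -- lower bound
  have hgt1 : 1 < (Polynomial.cyclotomic m ℤ).eval 2 := by
    have hR := Polynomial.sub_one_pow_totient_lt_cyclotomic_eval (n := m) (q := (2:ℝ)) hm2
      (by norm_num)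
    have hcast : (((Polynomial.cyclotomic m ℤ).eval (2:ℤ) : ℤ) : ℝ) = (Polynomial.cyclotomic m ℝ).eval 2 := by
      rw [← Polynomial.map_cyclotomic_int m ℝ]
      have := Polynomial.eval_intCast_map (Int.castRingHom ℝ) (Polynomial.cyclotomic m ℤ) 2
      simpa using this.symm
    rw [← hcast] at hR
    norm_num at hR
    exact_mod_cast hR
  have he29 : (Polynomial.cyclotomic m ℤ).eval 2 = 29 := by
    have hna : ((Polynomial.cyclotomic m ℤ).eval 2).natAbs ∣ 29 := by
      have := Int.natAbs_dvd_natAbs.mpr heval2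
      simpa using this
    have hp : Nat.Prime 29 := by norm_num
    rcases (Nat.Prime.eq_one_or_self_of_dvd hp _ hna) with h1 | h29
    · omega
    · omega
  -- 29 ∣ 2^m - 1
  have hdvd29 : (29:ℤ) ∣ 2^m - 1 := by
    have := Polynomial.eval_dvd (x := (2:ℤ)) (Polynomial.cyclotomic.dvd_X_pow_sub_one m ℤ)
    rw [he29] at this
    simpa using this
  have hzm : (2 : ZMod 29)^m = 1 := by
    have : ((2^m - 1 : ℤ) : ZMod 29) = 0 := by
      rw [ZMod.intCast_zmod_eq_zero_iff_dvd]
      exact_mod_cast hdvd29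
    push_cast at this
    linear_combination this
  have h28 : 28 ∣ m := by
    have hdecomp : m = 28 * (m / 28) + m % 28 := (Nat.div_add_mod m 28).symm
    have h2 : (2 : ZMod 29)^(m % 28) = 1 := by
      have h28p : (2 : ZMod 29)^28 = 1 := by decide
      calc (2 : ZMod 29)^(m % 28) = ((2:ZMod 29)^28)^(m/28) * 2^(m % 28) := by
            rw [h28p]; ring
        _ = (2:ZMod 29)^m := by rw [← pow_mul, ← pow_add, ← hdecomp]
        _ = 1 := hzm
    have hlt : m % 28 < 28 := Nat.mod_lt _ (by norm_num)
    have hzero : ∀ r < 28, (2 : ZMod 29)^r = 1 → r = 0 := by decide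
    have := hzero _ hlt h2
    omega
  have h12 : 12 ∣ Nat.totient m := by
    have hd := Nat.totient_dvd_of_dvd h28
    rwa [show Nat.totient 28 = 12 from by decide] at hd
  have hpos : 0 < Nat.totient m := Nat.totient_pos.mpr hmpos
  have := Nat.le_of_dvd hpos h12
  omega

lemma key (t : ℕ) (ht : 4 ≤ t) (hdvd : 4 ∣ t) (ζ : ℂ)
    (hζn : ζ ^ (4*t+8) = 1) (hne : ζ ≠ -1) :
    ∑ s ∈ Finset.Icc 1 (2*t+3) \ {t+1, t+3, t+4}, (ζ^s + (ζ^s)⁻¹) ≠ 0 := by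
  obtain ⟨u, hu⟩ := hdvd
  have hu1 : 1 ≤ u := by omega
  have hζ0 : ζ ≠ 0 := by
    intro h0
    rw [h0, zero_pow (by omega)] at hζn
    exact zero_ne_one hζn
  have h3sub : ({t+1, t+3, t+4} : Finset ℕ) ⊆ Finset.Icc 1 (2*t+3) := by
    intro x hx
    simp only [Finset.mem_insert, Finset.mem_singleton] at hx
    simp only [Finset.mem_Icc]
    omega
  have hcard : (Finset.Icc 1 (2*t+3) \ {t+1, t+3, t+4}).card = 2*t := by
    rw [Finset.card_sdiff_of_subset h3sub, Nat.card_Icc]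
    have : ({t+1, t+3, t+4} : Finset ℕ).card = 3 := by
      rw [Finset.card_insert_of_notMem (by simp),
        Finset.card_insert_of_notMem (by simp), Finset.card_singleton]
    omega
  intro hsum
  by_cases hζ1 : ζ = 1
  · rw [hζ1] at hsum
    simp only [one_pow, inv_one] at hsum
    rw [Finset.sum_const, hcard] at hsum
    norm_num at hsum
    omega
  -- replace inverses by powers
  have hconv : ∑ s ∈ Finset.Icc 1 (2*t+3) \ {t+1, t+3, t+4}, (ζ^s + (ζ^s)⁻¹)
      = ∑ s ∈ Finset.Icc 1 (2*t+3) \ {t+1, t+3, t+4}, (ζ^s + ζ^(4*t+8-s)) := by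
    apply Finset.sum_congr rfl
    intro s hs
    rw [Finset.mem_sdiff, Finset.mem_Icc] at hs
    congr 1
    have hmul : ζ^s * ζ^(4*t+8-s) = 1 := by
      rw [← pow_add]
      rw [show s + (4*t+8-s) = 4*t+8 by omega]
      exact hζn
    exact inv_eq_of_mul_eq_one_right hmul
  rw [hconv, Finset.sum_sdiff_eq_sub h3sub] at hsum
  -- the full interval sum
  have hζ1' : ζ - 1 ≠ 0 := sub_ne_zero.mpr hζ1
  have hA : ∑ s ∈ Finset.Icc 1 (2*t+3), (ζ^s + ζ^(4*t+8-s))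
      = -1 - ζ^(2*t+4) := by
    rw [Finset.sum_add_distrib]
    have h1 : ∑ s ∈ Finset.Icc 1 (2*t+3), ζ^s
        = (ζ^(2*t+4) - ζ^1)/(ζ - 1) := by
      rw [← Finset.Ico_add_one_right_eq_Icc]
      exact geom_sum_Ico hζ1 (by omega)
    have hrev : ∑ s ∈ Finset.Icc 1 (2*t+3), ζ^(4*t+8-s)
        = ∑ j ∈ Finset.Icc (2*t+5) (4*t+7), ζ^j := by
      refine Finset.sum_nbij' (fun s => 4*t+8-s) (fun j => 4*t+8-j) ?_ ?_ ?_ ?_ ?_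
      all_goals
        intro a ha
        simp only [Finset.mem_Icc] at ha ⊢
        try omega
    have h2 : ∑ j ∈ Finset.Icc (2*t+5) (4*t+7), ζ^j
        = (ζ^(4*t+8) - ζ^(2*t+5))/(ζ - 1) := by
      rw [← Finset.Ico_add_one_right_eq_Icc]
      exact geom_sum_Ico hζ1 (by omega)
    rw [h1, hrev, h2, hζn]
    rw [← add_div, div_eq_iff hζ1']
    have : ζ^(2*t+5) = ζ^(2*t+4) * ζ := by rw [← pow_succ]
    rw [this]
    ring
  -- the triple sum
  have hB : ∑ s ∈ ({t+1, t+3, t+4} : Finset ℕ), (ζ^s + ζ^(4*t+8-s))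
      = (ζ^(t+1) + ζ^(3*t+7)) + (ζ^(t+3) + ζ^(3*t+5)) + (ζ^(t+4) + ζ^(3*t+4)) := by
    rw [Finset.sum_insert (by simp), Finset.sum_insert (by simp),
      Finset.sum_singleton]
    rw [show 4*t+8-(t+1) = 3*t+7 by omega, show 4*t+8-(t+3) = 3*t+5 by omega,
      show 4*t+8-(t+4) = 3*t+4 by omega]
    ring
  rw [hA, hB] at hsum
  -- master equation, multiplied by ζ^2
  set μ := ζ^(t+2) with hμ
  have hμ0 : μ ≠ 0 := pow_ne_zero _ hζ0
  have hμ4 : μ^4 = 1 := by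
    rw [hμ, ← pow_mul]
    rw [show (t+2)*4 = 4*t+8 by omega]
    exact hζn
  have e1 : ζ^(t+1) * ζ = μ := by rw [hμ, ← pow_succ]
  have e3 : ζ^(t+3) = μ * ζ := by rw [hμ, ← pow_succ]
  have e4 : ζ^(t+4) = μ * ζ^2 := by rw [hμ, ← pow_add]
  have e34 : ζ^(3*t+4) * ζ^2 = μ^3 := by
    rw [hμ, ← pow_add, ← pow_mul]
    congr 1
    omega
  have e35 : ζ^(3*t+5) * ζ = μ^3 := by
    rw [hμ, ← pow_succ, ← pow_mul]
    congr 1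
    omega
  have e37 : ζ^(3*t+7) = μ^3 * ζ := by
    rw [hμ, ← pow_mul, ← pow_succ]
    congr 1
    omega
  -- E : master polynomial equation
  have E : μ*ζ + μ^3*ζ^3 + μ*ζ^3 + μ^3*ζ + μ*ζ^4 + μ^3
      + (1 + μ^2) * ζ^2 = 0 := by
    have := congrArg (fun z => z * ζ^2) hsum
    simp only [sub_mul, add_mul, zero_mul] at this
    have h24 : ζ^(2*t+4) = μ^2 := by rw [hμ, ← pow_mul]; congr 1; omega
    rw [h24] at this
    linear_combination -this - ζ*e1 - ζ^2*e3 - ζ^2*e4 - e34 - ζ*e35 - ζ^2*e37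
  -- case analysis on ε = μ^2
  have hsq : (μ^2 - 1) * (μ^2 + 1) = 0 := by linear_combination hμ4
  rcases mul_eq_zero.mp hsq with hε | hε
  · -- μ^2 = 1, so μ = 1 or μ = -1
    have hμsq : (μ - 1) * (μ + 1) = 0 := by linear_combination hε
    rcases mul_eq_zero.mp hμsq with hμ1 | hμm1
    · -- μ = 1 : (ζ^2+1)(ζ+1)^2 = 0
      have hμe : μ = 1 := by linear_combination hμ1
      have hfac : (ζ^2 + 1) * (ζ + 1)^2 = 0 := by
        rw [hμe] at E
        linear_combination E
      rcases mul_eq_zero.mp hfac with h2 | h2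
      · -- ζ^2 = -1 contradicts μ = 1
        have hz2 : ζ^2 = -1 := by linear_combination h2
        have : μ = (ζ^2)^(2*u+1) := by
          rw [hμ, ← pow_mul]
          congr 1
          omega
        rw [hz2, hμe] at this
        rw [Odd.neg_one_pow ⟨u, by omega⟩] at this
        norm_num at this
      · have : ζ + 1 = 0 := by
          have := sq_eq_zero_iff.mp h2
          exact this
        exact hne (by linear_combination this)
    · -- μ = -1 : cyclotomic case
      have hμe : μ = -1 := by linear_combination hμm1
      have hq : ζ^4 + 2*ζ^3 - 2*ζ^2 + 2*ζ + 1 = 0 := by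
        rw [hμe] at E
        linear_combination -E
      exact cyc_aux ζ (4*t+8) (by omega) hζn hq
  · -- μ^2 = -1 : ζ^4 = 1 and contradiction
    have hε' : μ^2 = -1 := by linear_combination hε
    have hz4 : ζ^4 = 1 := by
      have hμ3 : μ^3 = -μ := by
        have : μ^3 = μ^2 * μ := by ring
        rw [this, hε']; ring
      rw [hμ3] at E
      rw [hε'] at E
      -- E becomes -μ*ζ + ... : should reduce to μ*(ζ^4 - 1) = 0
      have hfac : μ * (ζ^4 - 1) = 0 := by linear_combination E
      rcases mul_eq_zero.mp hfac with h' | h'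
      · exact absurd h' hμ0
      · linear_combination h'
    have : μ^2 = ((ζ^4)^(2*u+1)) := by
      rw [hμ, ← pow_mul, ← pow_mul]
      congr 1
      omega
    rw [hz4, one_pow] at this
    rw [this] at hε'
    norm_num at hε'

section Main

variable (t n : ℕ)

/-- The connection set as a finset of naturals. -/
def Sset : Finset ℕ := Finset.Icc 1 (2*t+3) \ {t+1, t+3, t+4}

/-- The difference set inside `ZMod n`. -/
def Dset : Finset (ZMod n) :=
  (Sset t).image (Nat.cast) ∪ (Sset t).image (fun s : ℕ => -(s : ZMod n))

variable {t n}

lemma mem_Sset {s : ℕ} (hs : s ∈ Sset t) : 1 ≤ s ∧ s ≤ 2*t+3 := by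
  rw [Sset, Finset.mem_sdiff, Finset.mem_Icc] at hs
  exact hs.1

lemma card_Sset (ht : 4 ≤ t) : (Sset t).card = 2*t := by
  have h3sub : ({t+1, t+3, t+4} : Finset ℕ) ⊆ Finset.Icc 1 (2*t+3) := by
    intro x hx
    simp only [Finset.mem_insert, Finset.mem_singleton] at hx
    simp only [Finset.mem_Icc]
    omega
  rw [Sset, Finset.card_sdiff_of_subset h3sub, Nat.card_Icc]
  have : ({t+1, t+3, t+4} : Finset ℕ).card = 3 := by
    rw [Finset.card_insert_of_notMem (by simp),
      Finset.card_insert_of_notMem (by simp), Finset.card_singleton]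
  omega

variable [NeZero n] (hn : n = 4*t+8) (ht : 4 ≤ t)

include hn ht

lemma mem_Dset {d : ZMod n} :
    d ∈ Dset t n ↔ (d.val ∈ Sset t ∨ (-d).val ∈ Sset t) := by
  constructor
  · intro hd
    rw [Dset, Finset.mem_union] at hd
    rcases hd with hd | hd
    · obtain ⟨s, hs, rfl⟩ := Finset.mem_image.mp hd
      left
      rw [ZMod.val_cast_of_lt (by have := mem_Sset hs; omega)]
      exact hs
    · obtain ⟨s, hs, rfl⟩ := Finset.mem_image.mp hd
      right
      rw [neg_neg, ZMod.val_cast_of_lt (by have := mem_Sset hs; omega)]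
      exact hs
  · intro hd
    rw [Dset, Finset.mem_union]
    rcases hd with hd | hd
    · left
      exact Finset.mem_image.mpr ⟨d.val, hd, ZMod.natCast_rightInverse d⟩
    · right
      refine Finset.mem_image.mpr ⟨(-d).val, hd, ?_⟩
      rw [ZMod.natCast_rightInverse (-d), neg_neg]

lemma Dset_ne_zero {d : ZMod n} (hd : d ∈ Dset t n) : d ≠ 0 := by
  intro h0
  rw [h0] at hd
  rw [mem_Dset hn ht] at hd
  simp only [neg_zero, ZMod.val_zero] at hd
  rcases hd with hd | hd <;> exact absurd (mem_Sset hd).1 (by omega)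

lemma Dset_neg {d : ZMod n} : d ∈ Dset t n ↔ -d ∈ Dset t n := by
  rw [mem_Dset hn ht, mem_Dset hn ht, neg_neg, or_comm]

lemma adj_iff {i j : ZMod n} :
    (circulantGraph n (Sset t)).Adj i j ↔ j - i ∈ Dset t n := by
  have hadj : (circulantGraph n (Sset t)).Adj i j ↔
      (i ≠ j ∧ ((i - j).val ∈ Sset t ∨ (j - i).val ∈ Sset t)) := Iff.rfl
  have hD := mem_Dset (d := j - i) hn ht
  rw [show -(j - i) = i - j by ring] at hD
  rw [hadj, hD]
  constructor
  · rintro ⟨_, h⟩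
    exact h.symm
  · intro h
    refine ⟨?_, h.symm⟩
    intro he
    apply Dset_ne_zero hn ht (hD.mpr h)
    rw [he, sub_self]

lemma cast_ne_zero_of_mem {s : ℕ} (hs : s ∈ Sset t) : (s : ZMod n) ≠ 0 := by
  intro h0
  have h1 := mem_Sset hs
  have : (s : ZMod n).val = s := ZMod.val_cast_of_lt (by omega)
  rw [h0, ZMod.val_zero] at this
  omega

lemma Dset_disj :
    Disjoint ((Sset t).image ((Nat.cast : ℕ → ZMod n)))
      ((Sset t).image (fun s : ℕ => -(s : ZMod n))) := by
  rw [Finset.disjoint_left]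
  rintro x hx hx'
  obtain ⟨s, hs, rfl⟩ := Finset.mem_image.mp hx
  obtain ⟨s', hs', he⟩ := Finset.mem_image.mp hx'
  have h1 := mem_Sset hs
  have h2 := mem_Sset hs'
  have hv1 : ((s : ZMod n)).val = s := ZMod.val_cast_of_lt (by omega)
  have hv2 : (-(s' : ZMod n)).val = n - s' := by
    rw [ZMod.neg_val, if_neg (cast_ne_zero_of_mem hn ht hs'),
      ZMod.val_cast_of_lt (by omega)]
  rw [he] at hv2
  rw [hv1] at hv2
  omega

lemma card_Dset : (Dset t n).card = 4*t := by
  rw [Dset, Finset.card_union_of_disjoint (Dset_disj hn ht)]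
  have hinj1 : Set.InjOn (Nat.cast : ℕ → ZMod n) (Sset t) := by
    intro a ha b hb hab
    have h1 := mem_Sset ha
    have h2 := mem_Sset hb
    have : ((a : ZMod n)).val = ((b : ZMod n)).val := by rw [hab]
    rwa [ZMod.val_cast_of_lt (by omega), ZMod.val_cast_of_lt (by omega)] at this
  have hinj2 : Set.InjOn (fun s : ℕ => -(s : ZMod n)) (Sset t) := by
    intro a ha b hb hab
    simp only [neg_inj] at hab
    exact hinj1 ha hb hab
  rw [Finset.card_image_of_injOn hinj1, Finset.card_image_of_injOn hinj2, card_Sset ht]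
  omega

lemma adj_entry (i j : ZMod n) :
    adjMatrixQ (circulantGraph n (Sset t)) i j
      = if j - i ∈ Dset t n then (1:ℚ) else 0 := by
  by_cases h : j - i ∈ Dset t n
  · rw [if_pos h]
    have := (adj_iff hn ht).mpr h
    simp [adjMatrixQ, this]
  · rw [if_neg h]
    have : ¬ (circulantGraph n (Sset t)).Adj i j := fun ha => h ((adj_iff hn ht).mp ha)
    simp [adjMatrixQ, this]

lemma filter_eq_image (i : ZMod n) :
    Finset.univ.filter (fun j : ZMod n => j - i ∈ Dset t n)
      = (Dset t n).image (fun d => i + d) := by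
  ext j
  simp only [Finset.mem_filter, Finset.mem_univ, true_and, Finset.mem_image]
  constructor
  · intro h
    exact ⟨j - i, h, by ring⟩
  · rintro ⟨d, hd, rfl⟩
    rwa [add_sub_cancel_left]

lemma mulVec_eq (x : ZMod n → ℚ) (i : ZMod n) :
    (adjMatrixQ (circulantGraph n (Sset t))).mulVec x i = ∑ d ∈ Dset t n, x (i + d) := by
  rw [Matrix.mulVec, dotProduct]
  have h1 : ∀ j : ZMod n, adjMatrixQ (circulantGraph n (Sset t)) i j * x j
      = if j - i ∈ Dset t n then x j else 0 := by
    intro j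
    rw [adj_entry hn ht]
    by_cases h : j - i ∈ Dset t n <;> simp [h]
  rw [Finset.sum_congr rfl (fun j _ => h1 j), Finset.sum_ite, Finset.sum_const_zero, add_zero,
    filter_eq_image hn ht, Finset.sum_image (fun a _ b _ h => by
      simpa using add_right_injective i h)]

end Main

section Spectral

variable {n : ℕ} [NeZero n]

/-- The character `x ↦ ω ^ x.val`. -/
noncomputable def ef (n : ℕ) (ω : ℂ) (x : ZMod n) : ℂ := ω ^ x.val

variable {ω : ℂ}

lemma pow_mod_eq (hω : ω ^ n = 1) (a : ℕ) : ω ^ (a % n) = ω ^ a := by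
  conv_rhs => rw [← Nat.mod_add_div a n]
  rw [pow_add, pow_mul, hω, one_pow, mul_one]

lemma ef_cast (hω : ω ^ n = 1) (a : ℕ) : ef n ω (a : ZMod n) = ω ^ a := by
  rw [ef, ZMod.val_natCast, pow_mod_eq hω]

lemma ef_mul_eq (hω : ω ^ n = 1) (k i : ZMod n) : ef n ω (k * i) = (ω ^ k.val) ^ i.val := by
  have h : k * i = ((k.val * i.val : ℕ) : ZMod n) := by
    rw [Nat.cast_mul, ZMod.natCast_rightInverse k, ZMod.natCast_rightInverse i]
  rw [h, ef_cast hω, pow_mul]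

lemma ef_add_eq (hω : ω ^ n = 1) (x y : ZMod n) :
    ef n ω (x + y) = ef n ω x * ef n ω y := by
  rw [ef, ef, ef, ZMod.val_add, pow_mod_eq hω, pow_add]

lemma ef_zero : ef n ω 0 = 1 := by rw [ef, ZMod.val_zero, pow_zero]

lemma ef_neg (hω : ω ^ n = 1) (x : ZMod n) : ef n ω (-x) = (ef n ω x)⁻¹ := by
  refine (inv_eq_of_mul_eq_one_right ?_).symm
  rw [← ef_add_eq hω, add_neg_cancel, ef_zero]

lemma sum_pow_val {x : ℂ} (hx : x ^ n = 1) (hx1 : x ≠ 1) :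
    ∑ k : ZMod n, x ^ k.val = 0 := by
  have hconv : ∑ k : ZMod n, x ^ k.val = ∑ i ∈ Finset.range n, x ^ i := by
    refine Finset.sum_nbij' (fun k => k.val) (fun i => (i : ZMod n)) ?_ ?_ ?_ ?_ ?_
    · intro a _
      exact Finset.mem_range.mpr a.val_lt
    · intro a _
      exact Finset.mem_univ _
    · intro a _
      exact ZMod.natCast_rightInverse a
    · intro a ha
      exact ZMod.val_cast_of_lt (Finset.mem_range.mp ha)
    · intro a _
      rfl
  rw [hconv, geom_sum_eq hx1, hx, sub_self, zero_div]

lemma sum_ef_mul (hω : IsPrimitiveRoot ω n) (d : ZMod n) (hd : d ≠ 0) :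
    ∑ k : ZMod n, ef n ω (k * d) = 0 := by
  have h1 : ∀ k : ZMod n, ef n ω (k * d) = (ω ^ d.val) ^ k.val := by
    intro k
    rw [mul_comm, ef_mul_eq hω.pow_eq_one]
  rw [Finset.sum_congr rfl fun k _ => h1 k]
  refine sum_pow_val ?_ ?_
  · rw [← pow_mul, mul_comm, pow_mul, hω.pow_eq_one, one_pow]
  · refine hω.pow_ne_one_of_pos_of_lt ?_ d.val_lt
    have : d.val ≠ 0 := fun h => hd ((ZMod.val_eq_zero d).mp h)
    omega

lemma sum_ef_zero : ∑ k : ZMod n, ef n ω (k * 0) = (n : ℂ) := by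
  simp only [mul_zero, ef_zero, Finset.sum_const, Finset.card_univ, ZMod.card, nsmul_eq_mul,
    mul_one]

end Spectral

section KernelEq

variable {t n : ℕ} [NeZero n]

lemma kernel_eq (hn : n = 4*t+8) (ht : 4 ≤ t) (hdvd : 4 ∣ t) (v : ZMod n → ℚ)
    (hv : ∀ i : ZMod n, ∑ d ∈ Dset t n, v (i + d) = 0) (i : ZMod n) :
    v i = (-1)^(i.val) * v 0 := by
  obtain ⟨ω, hω⟩ : ∃ ω : ℂ, IsPrimitiveRoot ω n :=
    ⟨_, Complex.isPrimitiveRoot_exp n (NeZero.ne n)⟩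
  have hωn : ω ^ n = 1 := hω.pow_eq_one
  set vc : ZMod n → ℂ := fun i => (v i : ℂ) with hvc
  have hvC : ∀ i : ZMod n, ∑ d ∈ Dset t n, vc (i + d) = 0 := by
    intro i
    have h := congrArg (fun q : ℚ => (q : ℂ)) (hv i)
    push_cast at h
    exact h
  set φ : ZMod n → ℂ := fun k => ∑ j : ZMod n, ef n ω (k * j) * vc j with hφ
  -- eigenvalue equation
  have hlam : ∀ k : ZMod n, (∑ d ∈ Dset t n, ef n ω (k * d)) * φ k = 0 := by
    intro k
    have h0 : ∑ j : ZMod n, ef n ω (k * j) * (∑ d ∈ Dset t n, vc (j + d)) = 0 := by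
      rw [Finset.sum_congr rfl fun j _ => by rw [hvC j, mul_zero]]
      exact Finset.sum_const_zero
    have h1 : ∀ d : ZMod n, ∑ j : ZMod n, ef n ω (k * j) * vc (j + d)
        = ef n ω (k * (-d)) * φ k := by
      intro d
      have hre : ∑ j : ZMod n, ef n ω (k * j) * vc (j + d)
          = ∑ j : ZMod n, ef n ω (k * (j - d)) * vc j := by
        refine Fintype.sum_equiv (Equiv.addRight d) _ _ ?_
        intro x
        simp only [Equiv.coe_addRight, add_sub_cancel_right]
      rw [hre, hφ]
      rw [Finset.mul_sum]
      refine Finset.sum_congr rfl fun j _ => ?_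
      rw [show k * (j - d) = k * j + k * (-d) by ring, ef_add_eq hωn]
      ring
    have h2 : ∑ j : ZMod n, ef n ω (k * j) * (∑ d ∈ Dset t n, vc (j + d))
        = ∑ d ∈ Dset t n, ef n ω (k * (-d)) * φ k := by
      rw [Finset.sum_congr rfl fun j _ => Finset.mul_sum _ _ _]
      rw [Finset.sum_comm]
      exact Finset.sum_congr rfl fun d _ => h1 d
    have h3 : ∑ d ∈ Dset t n, ef n ω (k * (-d)) = ∑ d ∈ Dset t n, ef n ω (k * d) := by
      refine Finset.sum_nbij' (fun d => -d) (fun d => -d) ?_ ?_ ?_ ?_ ?_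
      · intro d hd
        exact (Dset_neg hn ht).mp hd
      · intro d hd
        exact (Dset_neg hn ht).mp hd
      · intro d _
        simp
      · intro d _
        simp
      · intro d _
        rfl
    rw [← h3, Finset.sum_mul]
    rw [← h2]
    exact h0
  -- the special frequency
  set k₀ : ZMod n := ((2*t+4 : ℕ) : ZMod n) with hk₀
  have hk0val : k₀.val = 2*t+4 := ZMod.val_cast_of_lt (by omega)
  have hhalf : ω ^ (2*t+4) = -1 := by
    have hne1 : ω ^ (2*t+4) ≠ 1 := hω.pow_ne_one_of_pos_of_lt (by omega) (by omega)
    have hx2 : (ω ^ (2*t+4))^2 = 1 := by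
      rw [← pow_mul, show (2*t+4)*2 = n by omega, hωn]
    generalize hg : ω ^ (2*t+4) = x at hne1 hx2 ⊢
    have hsq : (x - 1) * (x + 1) = 0 := by linear_combination hx2
    rcases mul_eq_zero.mp hsq with h | h
    · exact absurd (by linear_combination h) hne1
    · linear_combination h
  have hek0 : ∀ j : ZMod n, ef n ω (k₀ * j) = (-1)^(j.val) := by
    intro j
    rw [ef_mul_eq hωn, hk0val, hhalf]
  -- vanishing of other Fourier coefficients
  have hphi0 : ∀ k : ZMod n, k ≠ k₀ → φ k = 0 := by
    intro k hk
    rcases mul_eq_zero.mp (hlam k) with h | h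
    · exfalso
      set ζ : ℂ := ω ^ k.val with hζ
      have hζn' : ζ ^ (4*t+8) = 1 := by
        rw [hζ, ← pow_mul, mul_comm, pow_mul, ← hn, hωn, one_pow]
      have hζne : ζ ≠ -1 := by
        intro hζm
        apply hk
        have he : ω ^ k.val = ω ^ (2*t+4) := by rw [← hζ, hζm, hhalf]
        have hv' := hω.pow_inj k.val_lt (by omega) he
        rw [← ZMod.natCast_rightInverse k, hv', hk₀]
      have hlameq : ∑ d ∈ Dset t n, ef n ω (k * d)
          = ∑ s ∈ Sset t, (ζ^s + (ζ^s)⁻¹) := by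
        rw [Dset, Finset.sum_union (Dset_disj hn ht),
          Finset.sum_image (fun a ha b hb hab => by
            have h1 := mem_Sset (t := t) ha
            have h2 := mem_Sset (t := t) hb
            have := congrArg ZMod.val hab
            rwa [ZMod.val_cast_of_lt (n := n) (by omega),
              ZMod.val_cast_of_lt (n := n) (by omega)] at this),
          Finset.sum_image (fun a ha b hb hab => by
            have h1 := mem_Sset (t := t) ha
            have h2 := mem_Sset (t := t) hb
            simp only [neg_inj] at hab
            have := congrArg ZMod.val hab
            rwa [ZMod.val_cast_of_lt (n := n) (by omega),
              ZMod.val_cast_of_lt (n := n) (by omega)] at this),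
          ← Finset.sum_add_distrib]
        refine Finset.sum_congr rfl fun s _ => ?_
        have hcs : ef n ω (k * (s : ZMod n)) = ζ ^ s := by
          rw [show k * (s : ZMod n) = ((k.val * s : ℕ) : ZMod n) by
              rw [Nat.cast_mul, ZMod.natCast_rightInverse k],
            ef_cast hωn, pow_mul]
        have hcs' : ef n ω (k * (-(s : ZMod n))) = (ζ ^ s)⁻¹ := by
          rw [show k * (-(s : ZMod n)) = -(k * (s : ZMod n)) by ring, ef_neg hωn, hcs]
        rw [hcs, hcs']
      have hfin : ∑ s ∈ Sset t, (ζ^s + (ζ^s)⁻¹) = 0 := by rw [← hlameq]; exact h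
      exact key t ht hdvd ζ hζn' hζne hfin
    · exact h
  -- Fourier inversion at the surviving frequency
  have hinv : ∀ j : ZMod n, (n : ℂ) * vc j = ef n ω (-(k₀ * j)) * φ k₀ := by
    intro j
    have h1 : ∑ k : ZMod n, ef n ω (-(k * j)) * φ k = (n : ℂ) * vc j := by
      have hswap : ∑ k : ZMod n, ef n ω (-(k * j)) * φ k
          = ∑ l : ZMod n, (∑ k : ZMod n, ef n ω (k * (l - j))) * vc l := by
        rw [Finset.sum_congr rfl fun k _ => by
          rw [hφ, Finset.mul_sum]]
        rw [Finset.sum_comm]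
        refine Finset.sum_congr rfl fun l _ => ?_
        rw [Finset.sum_mul]
        refine Finset.sum_congr rfl fun k _ => ?_
        rw [show k * (l - j) = k * l + (-(k * j)) by ring, ef_add_eq hωn]
        ring
      rw [hswap]
      rw [Finset.sum_eq_single j]
      · rw [sub_self, sum_ef_zero]
      · intro l _ hl
        rw [sum_ef_mul hω _ (sub_ne_zero.mpr hl), zero_mul]
      · intro h
        exact absurd (Finset.mem_univ _) h
    have h2 : ∑ k : ZMod n, ef n ω (-(k * j)) * φ k = ef n ω (-(k₀ * j)) * φ k₀ := by
      refine Finset.sum_eq_single k₀ (fun k _ hk => by rw [hphi0 k hk, mul_zero]) ?_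
      intro h
      exact absurd (Finset.mem_univ _) h
    rw [← h1, h2]
  have hnC : (n : ℂ) ≠ 0 := Nat.cast_ne_zero.mpr (NeZero.ne n)
  have hefneg : ∀ j : ZMod n, ef n ω (-(k₀ * j)) = (-1)^(j.val) := by
    intro j
    rw [ef_neg hωn, hek0, ← inv_pow, inv_neg, inv_one]
  have hi := hinv i
  have h0 := hinv 0
  rw [hefneg, ZMod.val_zero, pow_zero, one_mul] at h0
  rw [hefneg, ← h0] at hi
  have : vc i = (-1)^(i.val) * vc 0 := by
    apply mul_left_cancel₀ hnC
    rw [hi]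
    ring
  rw [hvc] at this
  simp only at this
  exact_mod_cast this

end KernelEq

section Assemble

variable {t n : ℕ} [NeZero n]

lemma triple_subset (ht : 4 ≤ t) : ({t+1, t+3, t+4} : Finset ℕ) ⊆ Finset.Icc 1 (2*t+3) := by
  intro x hx
  simp only [Finset.mem_insert, Finset.mem_singleton] at hx
  simp only [Finset.mem_Icc]
  omega

lemma Ssum (ht : 4 ≤ t) (hdvd : 4 ∣ t) : ∑ s ∈ Sset t, ((-1:ℚ))^s = 0 := by
  rw [Sset, Finset.sum_sdiff_eq_sub (triple_subset ht)]
  have h1 : ∑ s ∈ Finset.Icc 1 (2*t+3), ((-1:ℚ))^s = -1 := by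
    rw [← Finset.Ico_add_one_right_eq_Icc, Finset.sum_Ico_eq_sum_range,
      show 2*t+3+1 - 1 = 2*t+3 from rfl]
    have hre : ∀ x ∈ Finset.range (2*t+3), ((-1:ℚ))^(1+x) = (-1) * (-1)^x := by
      intro x _
      rw [pow_add, pow_one]
    rw [Finset.sum_congr rfl hre, ← Finset.mul_sum, neg_one_geom_sum,
      if_neg (by rintro ⟨r, hr⟩; omega)]
    ring
  have h2 : ∑ s ∈ ({t+1, t+3, t+4} : Finset ℕ), ((-1:ℚ))^s = -1 := by
    rw [Finset.sum_insert (by simp), Finset.sum_insert (by simp), Finset.sum_singleton]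
    obtain ⟨u, hu⟩ := hdvd
    rw [show t+1 = 2*(2*u)+1 by omega, show t+3 = 2*(2*u+1)+1 by omega,
      show t+4 = 2*(2*u+2) by omega]
    rw [pow_succ, pow_mul, pow_mul, pow_succ, pow_mul]
    norm_num
    exact Odd.neg_one_pow ⟨2*u+1, rfl⟩
  rw [h1, h2]
  ring

lemma wsum (hn : n = 4*t+8) (ht : 4 ≤ t) (hdvd : 4 ∣ t) (i : ZMod n) :
    ∑ d ∈ Dset t n, ((-1:ℚ))^((i + d).val) = 0 := by
  have hne : Even n := ⟨2*t+4, by omega⟩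
  have hmod : ∀ a : ℕ, ((-1:ℚ))^(a % n) = (-1)^a := by
    intro a
    conv_rhs => rw [← Nat.mod_add_div a n]
    rw [pow_add, pow_mul, Even.neg_one_pow hne, one_pow, mul_one]
  have hsplit : ∀ x y : ZMod n, ((-1:ℚ))^((x+y).val) = (-1)^x.val * (-1)^y.val := by
    intro x y
    rw [ZMod.val_add, hmod, pow_add]
  rw [Finset.sum_congr rfl fun d _ => hsplit i d, ← Finset.mul_sum]
  have hDsum : ∑ d ∈ Dset t n, ((-1:ℚ))^(d.val) = 0 := by
    rw [Dset, Finset.sum_union (Dset_disj hn ht),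
      Finset.sum_image (fun a ha b hb hab => by
        have h1 := mem_Sset (t := t) ha
        have h2 := mem_Sset (t := t) hb
        have := congrArg ZMod.val hab
        rwa [ZMod.val_cast_of_lt (n := n) (by omega),
          ZMod.val_cast_of_lt (n := n) (by omega)] at this),
      Finset.sum_image (fun a ha b hb hab => by
        have h1 := mem_Sset (t := t) ha
        have h2 := mem_Sset (t := t) hb
        simp only [neg_inj] at hab
        have := congrArg ZMod.val hab
        rwa [ZMod.val_cast_of_lt (n := n) (by omega),
          ZMod.val_cast_of_lt (n := n) (by omega)] at this)]
    have hv1 : ∀ s ∈ Sset t, ((-1:ℚ))^(((s:ZMod n)).val) = (-1)^s := by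
      intro s hs
      have := mem_Sset hs
      rw [ZMod.val_cast_of_lt (by omega)]
    have hv2 : ∀ s ∈ Sset t, ((-1:ℚ))^((-(s:ZMod n)).val) = (-1)^s := by
      intro s hs
      have hb := mem_Sset hs
      rw [ZMod.neg_val, if_neg (cast_ne_zero_of_mem hn ht hs),
        ZMod.val_cast_of_lt (by omega)]
      have hmul : ((-1:ℚ))^(n-s) * (-1)^s = 1 := by
        rw [← pow_add, show n - s + s = n by omega, Even.neg_one_pow hne]
      have hs2 : ((-1:ℚ))^s * (-1)^s = 1 := by
        rw [← pow_add]
        exact Even.neg_one_pow ⟨s, rfl⟩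
      exact mul_right_cancel₀ (b := ((-1:ℚ))^s) (pow_ne_zero s (by norm_num)) (by rw [hmul, hs2])
    rw [Finset.sum_congr rfl hv1, Finset.sum_congr rfl hv2, Ssum ht hdvd]
    ring
  rw [hDsum, mul_zero]

end Assemble

section Final

variable {t n : ℕ} [NeZero n]

lemma deg_eq (hn : n = 4*t+8) (ht : 4 ≤ t) (vtx : ZMod n) :
    ((circulantGraph n (Sset t)).neighborSet vtx).ncard = 4*t := by
  have himg : (circulantGraph n (Sset t)).neighborSet vtx
      = (fun d => vtx + d) '' ↑(Dset t n) := by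
    ext j
    simp only [SimpleGraph.mem_neighborSet, Set.mem_image, Finset.mem_coe]
    rw [adj_iff hn ht]
    constructor
    · intro h
      exact ⟨j - vtx, h, by ring⟩
    · rintro ⟨d, hd, rfl⟩
      rwa [add_sub_cancel_left]
  rw [himg, Set.ncard_image_of_injective _ (add_right_injective vtx),
    Set.ncard_coe_finset, card_Dset hn ht]

theorem circulant_nut_graph_4t_plus_8_case1 (t n : ℕ) [NeZero n] (hn : n = 4 * t + 8)
    (ht : 4 ≤ t) (hdvd : 4 ∣ t) :
    IsNutGraph (circulantGraph n (Finset.Icc 1 (2 * t + 3) \ {t + 1, t + 3, t + 4})) ∧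
      ∀ v : ZMod n,
        ((circulantGraph n (Finset.Icc 1 (2 * t + 3) \ {t + 1, t + 3, t + 4})).neighborSet
            v).ncard = 4 * t := by
  have hX : Finset.Icc 1 (2 * t + 3) \ {t + 1, t + 3, t + 4} = Sset t := rfl
  rw [hX]
  set w : ZMod n → ℚ := fun i => (-1)^(i.val) with hwdef
  have hw : (adjMatrixQ (circulantGraph n (Sset t))).mulVec w = 0 := by
    funext i
    rw [mulVec_eq hn ht]
    exact wsum hn ht hdvd i
  have hw0 : w ≠ 0 := by
    intro h
    have := congrFun h 0
    simp only [hwdef, ZMod.val_zero, pow_zero, Pi.zero_apply] at this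
    norm_num at this
  refine ⟨⟨⟨0⟩, ?_, ⟨w, hw, fun i => pow_ne_zero _ (by norm_num)⟩⟩, fun vtx => deg_eq hn ht vtx⟩
  have hker : LinearMap.ker (adjMatrixQ (circulantGraph n (Sset t))).mulVecLin
      = Submodule.span ℚ {w} := by
    apply le_antisymm
    · intro v hvk
      rw [LinearMap.mem_ker] at hvk
      have hv' : ∀ i : ZMod n, ∑ d ∈ Dset t n, v (i + d) = 0 := by
        intro i
        rw [← mulVec_eq hn ht]
        rw [Matrix.mulVecLin_apply] at hvk
        rw [hvk]
        rfl
      have hvi := fun i => kernel_eq hn ht hdvd v hv' i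
      rw [Submodule.mem_span_singleton]
      refine ⟨v 0, funext fun i => ?_⟩
      rw [Pi.smul_apply, smul_eq_mul, hwdef, hvi i]
      ring
    · rw [Submodule.span_le, Set.singleton_subset_iff]
      exact LinearMap.mem_ker.mpr (by rw [Matrix.mulVecLin_apply]; exact hw)
  rw [hker]
  exact finrank_span_singleton hw0

end Final
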